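/- arXiv:2404.03757 — 6 statements merged into one kernel-verified Lean document; each statement's English description precedes it below -/
import Mathlib

section
/- Let G and H be groups, let n ≥ 1, and let α : G → H be a surjective group homomorphism. Then the map Ψ : G^n_H → (ker α)^{n-1} ⋊_φ G defined by Ψ(g_1, …, g_n) = (g_1 g_n^{-1}, …, g_{n-1} g_n^{-1}, g_n) is a group isomorphism, where φ : G → Aut((ker α)^{n-1}) is the action by coordinatewise conjugation, φ(g)(x_1, …, x_{n-1}) = (g x_1 g^{-1}, …, g x_{n-1} g^{-1}). -/
/-- The `n`-fold fibre product `G^n_H` of a homomorphism `α : G →* H`,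
as a subgroup of `Gⁿ`: all tuples whose coordinates have equal images under `α`. -/
def fiberProd {G H : Type*} [Group G] [Group H] (α : G →* H) (n : ℕ) :
    Subgroup (Fin n → G) where
  carrier := {g | ∀ i j, α (g i) = α (g j)}
  one_mem' := fun _ _ => rfl
  mul_mem' := by
    intro a b ha hb i j
    simp only [Pi.mul_apply, map_mul, ha i j, hb i j]
  inv_mem' := by
    intro a ha i j
    simp only [Pi.inv_apply, map_inv, ha i j]

/-- Coordinatewise action of an automorphism on a finite power. -/
def piAut {ι : Type*} {M : Type*} [Monoid M] : MulAut M →* MulAut (ι → M) where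
  toFun e := MulEquiv.piCongrRight fun _ => e
  map_one' := by ext x; rfl
  map_mul' := by intros; ext x; rfl

/-- The action `φ : G →* Aut((ker α)^{n-1})` by coordinatewise conjugation. -/
def kerAct {G H : Type*} [Group G] [Group H] (α : G →* H) (m : ℕ) :
    G →* MulAut (Fin m → α.ker) :=
  piAut.comp MulAut.conjNormal

lemma kerAct_coe {G H : Type*} [Group G] [Group H] (α : G →* H) (m : ℕ)
    (g : G) (b : Fin m → α.ker) (i : Fin m) :
    ((kerAct α m g b i : α.ker) : G) = g * (b i : G) * g⁻¹ := rfl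

/-- For a surjective group homomorphism `α : G → H` and `n ≥ 1`,
the map `Ψ : G^n_H → (ker α)^{n-1} ⋊_φ G`,
`Ψ(g_1, …, g_n) = (g_1 g_n⁻¹, …, g_{n-1} g_n⁻¹, g_n)`, is a group isomorphism,
where `φ` is the coordinatewise conjugation action. -/
theorem stmt_1 {G H : Type*} [Group G] [Group H] (n : ℕ) (hn : 1 ≤ n)
    (α : G →* H) (hα : Function.Surjective α) :
    ∃ e : fiberProd α n ≃* (Fin (n - 1) → α.ker) ⋊[kerAct α (n - 1)] G,
      ∀ x : fiberProd α n,
        (e x).right = x.1 ⟨n - 1, by omega⟩ ∧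
        ∀ i : Fin (n - 1),
          ((e x).left i : G) = x.1 (Fin.castLE (by omega) i) * (x.1 ⟨n - 1, by omega⟩)⁻¹ := by
  have hL : n - 1 < n := by omega
  set L : Fin n := ⟨n - 1, hL⟩ with hLdef
  have hker : ∀ (g : fiberProd α n) (i : Fin (n - 1)),
      g.1 (Fin.castLE (by omega) i) * (g.1 L)⁻¹ ∈ α.ker := by
    intro g i
    have := g.2 (Fin.castLE (by omega) i) L
    simp [MonoidHom.mem_ker, map_mul, map_inv, this]
  let Ψ : fiberProd α n →* (Fin (n - 1) → α.ker) ⋊[kerAct α (n - 1)] G :=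
  { toFun := fun g =>
      ⟨fun i => ⟨g.1 (Fin.castLE (by omega) i) * (g.1 L)⁻¹, hker g i⟩, g.1 L⟩
    map_one' := by
      refine SemidirectProduct.ext ?_ rfl
      funext i
      exact Subtype.ext (by simp)
    map_mul' := by
      intro a b
      refine SemidirectProduct.ext ?_ rfl
      funext i
      refine Subtype.ext ?_
      simp only [SemidirectProduct.mul_left, Pi.mul_apply, Submonoid.coe_mul,
        Subgroup.coe_toSubmonoid, Subgroup.coe_mul, MulMemClass.coe_mul, kerAct_coe]
      group }
  have hinj : Function.Injective Ψ := by
    intro a b hab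
    have h1 : a.1 L = b.1 L := congrArg SemidirectProduct.right hab
    have h2 : ∀ i : Fin (n - 1),
        a.1 (Fin.castLE (by omega) i) * (a.1 L)⁻¹
          = b.1 (Fin.castLE (by omega) i) * (b.1 L)⁻¹ := by
      intro i
      exact congrArg Subtype.val (congrFun (congrArg SemidirectProduct.left hab) i)
    refine Subtype.ext (funext fun i => ?_)
    rcases Nat.lt_or_ge i.1 (n - 1) with h | h
    · have := h2 ⟨i.1, h⟩
      have hi : (Fin.castLE (by omega : n - 1 ≤ n) ⟨i.1, h⟩) = i := rfl
      rw [hi, h1] at this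
      exact mul_right_cancel this
    · have hil := i.isLt
      have hi : i = L := Fin.ext (show i.1 = n - 1 by omega)
      rw [hi, h1]
  have hsurj : Function.Surjective Ψ := by
    rintro ⟨a, x⟩
    refine ⟨⟨fun i => if h : i.1 < n - 1 then (a ⟨i.1, h⟩ : G) * x else x, ?_⟩, ?_⟩
    · intro i j
      have key : ∀ k : Fin n, α (if h : k.1 < n - 1 then (a ⟨k.1, h⟩ : G) * x else x) = α x := by
        intro k
        by_cases h : k.1 < n - 1
        · rw [dif_pos h, map_mul, MonoidHom.mem_ker.mp (a ⟨k.1, h⟩).2, one_mul]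
        · rw [dif_neg h]
      rw [key i, key j]
    · refine SemidirectProduct.ext ?_ ?_
      · funext i
        refine Subtype.ext ?_
        show (if h : (Fin.castLE (by omega : n - 1 ≤ n) i).1 < n - 1 then _ else x) *
          (if h : (L : Fin n).1 < n - 1 then _ else x)⁻¹ = (a i : G)
        split_ifs with h1 h2 h2
        · exact absurd h2 (lt_irrefl (n - 1))
        · have hi : (⟨(Fin.castLE (by omega : n - 1 ≤ n) i).1, h1⟩ : Fin (n - 1)) = i :=
            Fin.ext rfl
          rw [hi]
          group
        · exact absurd i.2 h1
        · exact absurd i.2 h1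
      · show (if h : (L : Fin n).1 < n - 1 then _ else x) = x
        exact dif_neg (lt_irrefl (n - 1))
  exact ⟨MulEquiv.ofBijective Ψ ⟨hinj, hsurj⟩, fun x => ⟨rfl, fun i => rfl⟩⟩
end

section
/- Let G and H be groups, let n ≥ 1, and let α : G → H be a surjective group homomorphism. Suppose N is a normal subgroup of G such that the commutator subgroup ⁅N, ker α⁆ is trivial (i.e., every element of N commutes with every element of ker α). Then Δ_n(N) = {(a, …, a) : a ∈ N} is a normal subgroup of G^n_H. -/
/-- The diagonal homomorphism `Δ_n : G →* Gⁿ`. -/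
def diagHom (G : Type*) [Group G] (n : ℕ) : G →* (Fin n → G) where
  toFun g := fun _ => g
  map_one' := rfl
  map_mul' _ _ := rfl

/-- Let `α : G → H` be a surjective group homomorphism, `n ≥ 1`, and
let `N` be a normal subgroup of `G` such that `⁅N, ker α⁆ = 1` (every element of `N`
commutes with every element of `ker α`). Then `Δ_n(N)` is a normal subgroup of the
fibre product `G^n_H`. -/
theorem stmt_3 {G H : Type*} [Group G] [Group H] (n : ℕ) (hn : 1 ≤ n)
    (α : G →* H) (hα : Function.Surjective α)
    (N : Subgroup G) (hN : N.Normal)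
    (hcomm : ∀ a ∈ N, ∀ k ∈ α.ker, a * k = k * a) :
    ∀ g ∈ fiberProd α n, ∀ x ∈ N.map (diagHom G n), g * x * g⁻¹ ∈ N.map (diagHom G n) := by
  intro g hg x hx
  obtain ⟨a, ha, rfl⟩ := hx
  set i0 : Fin n := ⟨0, hn⟩
  refine ⟨g i0 * a * (g i0)⁻¹, hN.conj_mem a ha _, ?_⟩
  funext i
  have hk : g i * (g i0)⁻¹ ∈ α.ker := by
    rw [MonoidHom.mem_ker, map_mul, map_inv, hg i i0, mul_inv_cancel]
  have hcm := hcomm (g i0 * a * (g i0)⁻¹) (hN.conj_mem a ha _) _ hk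
  show g i0 * a * (g i0)⁻¹ = g i * ((fun _ => a) i) * (g⁻¹ i)
  have : g i * a * (g i)⁻¹ = g i0 * a * (g i0)⁻¹ := by
    have h2 : g i = (g i * (g i0)⁻¹) * g i0 := by group
    calc g i * a * (g i)⁻¹
        = (g i * (g i0)⁻¹) * (g i0 * a * (g i0)⁻¹) * (g i * (g i0)⁻¹)⁻¹ := by group
      _ = g i0 * a * (g i0)⁻¹ := by rw [← hcm]; group
  simp only [Pi.inv_apply]
  rw [← this]
end

section
/- Let G and H be groups, let n ≥ 2, let α : G → H be a surjective group homomorphism, and let k_1, …, k_{n-1} ∈ ker α. Set b = (k_1, …, k_{n-1}, 1) ∈ G^n_H. Then Δ_n(G) ∩ b Δ_n(G) b^{-1} = Δ_n(⋂_{i=1}^{n-1} C_G(k_i)), where C_G(k_i) denotes the centralizer of k_i in G; equivalently, for g ∈ G, the diagonal element Δ_n(g) lies in b Δ_n(G) b^{-1} if and only if g commutes with each k_i. -/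
/-- Let `α : G → H` be a surjective group homomorphism, `n ≥ 2`,
`k_1, …, k_{n-1} ∈ ker α`, and `b = (k_1, …, k_{n-1}, 1) ∈ G^n_H`. Then
`Δ_n(G) ∩ b Δ_n(G) b⁻¹ = Δ_n(⋂_{i=1}^{n-1} C_G(k_i))`; equivalently, for `g ∈ G`,
`Δ_n(g) ∈ b Δ_n(G) b⁻¹` if and only if `g` commutes with each `k_i`. -/
theorem stmt_4 {G H : Type*} [Group G] [Group H] (n : ℕ) (hn : 2 ≤ n)
    (α : G →* H) (hα : Function.Surjective α)
    (k : Fin (n - 1) → G) (hk : ∀ i, k i ∈ α.ker)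
    (b : Fin n → G)
    (hb : ∀ i : Fin (n - 1), b (Fin.castLE (by omega) i) = k i)
    (hblast : b ⟨n - 1, by omega⟩ = 1) :
    ((diagHom G n).range ⊓ Subgroup.map (MulAut.conj b).toMonoidHom (diagHom G n).range
        = Subgroup.map (diagHom G n) (⨅ i : Fin (n - 1), Subgroup.centralizer {k i}))
    ∧ ∀ g : G, (∃ x : G, diagHom G n g = b * diagHom G n x * b⁻¹)
        ↔ ∀ i : Fin (n - 1), g * k i = k i * g := by
  have key : ∀ g : G, (∃ x : G, diagHom G n g = b * diagHom G n x * b⁻¹)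
      ↔ ∀ i : Fin (n - 1), g * k i = k i * g := by
    intro g
    constructor
    · rintro ⟨x, hx⟩ i
      have hlast := congrFun hx ⟨n - 1, by omega⟩
      simp only [diagHom, MonoidHom.coe_mk, OneHom.coe_mk, Pi.mul_apply, Pi.inv_apply,
        hblast, one_mul, inv_one, mul_one] at hlast
      have hi := congrFun hx (Fin.castLE (by omega) i)
      simp only [diagHom, MonoidHom.coe_mk, OneHom.coe_mk, Pi.mul_apply, Pi.inv_apply,
        hb i] at hi
      subst hlast
      calc g * k i = (k i * g * (k i)⁻¹) * k i := by rw [← hi]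
        _ = k i * g := by group
    · intro h
      refine ⟨g, ?_⟩
      funext j
      simp only [diagHom, MonoidHom.coe_mk, OneHom.coe_mk, Pi.mul_apply, Pi.inv_apply]
      rcases lt_or_eq_of_le (show j.val ≤ n - 1 by omega) with hj | hj
      · have : b j = k ⟨j, hj⟩ := by
          have := hb ⟨j, hj⟩
          convert this using 2
          exact Fin.ext rfl
        rw [this, ← h ⟨j, hj⟩]
        group
      · have : b j = 1 := by
          have : j = ⟨n - 1, by omega⟩ := by ext; exact hj
          rw [this, hblast]
        rw [this]; group
  refine ⟨?_, key⟩
  ext y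
  simp only [Subgroup.mem_inf, MonoidHom.mem_range, Subgroup.mem_map,
    MulEquiv.coe_toMonoidHom, MulAut.conj_apply, Subgroup.mem_iInf,
    Subgroup.mem_centralizer_iff, Set.mem_singleton_iff, forall_eq]
  constructor
  · rintro ⟨⟨g, rfl⟩, y, ⟨x, rfl⟩, hx⟩
    exact ⟨g, fun i => ((key g).mp ⟨x, hx.symm⟩ i).symm, rfl⟩
  · rintro ⟨g, hg, rfl⟩
    obtain ⟨x, hx⟩ := (key g).mpr fun i => (hg i).symm
    exact ⟨⟨g, rfl⟩, diagHom G n x, ⟨x, rfl⟩, hx.symm⟩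
end

section
/- Let G and H be groups, let n ≥ 1, and let α : G → H be a surjective group homomorphism. Let A_1, …, A_n be subgroups of G such that ⋂_{i=1}^n g_i A_i g_i^{-1} = {1} for every tuple (g_1, …, g_n) ∈ G^n_H. Let L = G^n_H ∩ (A_1 × ⋯ × A_n). Then for every subgroup N of G^n for which there exists g ∈ G^n_H with g N g^{-1} = Δ_n(G), one has L ∩ N = {1}. -/
/-- Let `α : G → H` be a surjective group homomorphism, `n ≥ 1`, and
let `A_1, …, A_n ≤ G` with `⋂ᵢ gᵢ Aᵢ gᵢ⁻¹ = {1}` for every `(g_1, …, g_n) ∈ G^n_H`.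
Set `L = G^n_H ∩ (A_1 × ⋯ × A_n)`. Then for every subgroup `N` of `Gⁿ` such that
`g N g⁻¹ = Δ_n(G)` for some `g ∈ G^n_H`, we have `L ∩ N = {1}`. -/
theorem stmt_5 {G H : Type*} [Group G] [Group H] (n : ℕ) (hn : 1 ≤ n)
    (α : G →* H) (hα : Function.Surjective α)
    (A : Fin n → Subgroup G)
    (hA : ∀ g ∈ fiberProd α n, ∀ x : G, (∀ i, (g i)⁻¹ * x * g i ∈ A i) → x = 1) :
    ∀ N : Subgroup (Fin n → G),
      (∃ g ∈ fiberProd α n,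
        Subgroup.map (MulAut.conj g).toMonoidHom N = (diagHom G n).range) →
      (fiberProd α n ⊓ Subgroup.pi Set.univ A) ⊓ N = ⊥ := by
  rintro N ⟨g, hg, hN⟩
  rw [eq_bot_iff]
  rintro x ⟨⟨hxf, hxA⟩, hxN⟩
  have hgx : g * x * g⁻¹ ∈ Subgroup.map (MulAut.conj g).toMonoidHom N :=
    ⟨x, hxN, rfl⟩
  rw [hN] at hgx
  obtain ⟨y, hy⟩ := hgx
  have hy' : ∀ i, g i * x i * (g i)⁻¹ = y := fun i => congrFun hy i |>.symm
  have hxi : ∀ i, x i = (g i)⁻¹ * y * g i := by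
    intro i
    rw [← hy' i]; group
  have : y = 1 := by
    apply hA g hg
    intro i
    rw [← hxi i]
    exact hxA i (Set.mem_univ i)
  have : ∀ i, x i = 1 := fun i => by rw [hxi i, this]; group
  exact Subgroup.mem_bot.mpr (funext this)
end

section
/- Let p : E → B and f : B̃ → B be continuous maps, and let p̃ : Ẽ → B̃ be the pullback of p along f, where Ẽ = {(b̃, e) ∈ B̃ × E : f(b̃) = p(e)} and p̃(b̃, e) = b̃. Fix n ≥ 2 and r ≥ 0. If there exist open sets U_0, …, U_r covering E^n_B together with continuous maps s_i : U_i → E^I_B satisfying Π_n ∘ s_i = (inclusion of U_i into E^n_B) for each i, then there exist open sets V_0, …, V_r covering Ẽ^n_{B̃} together with continuous maps σ_i : V_i → Ẽ^I_{B̃} satisfying Π̃_n ∘ σ_i = (inclusion of V_i into Ẽ^n_{B̃}) for each i. -/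
/-- The space `E^n_B` of `n`-tuples of points of `E` lying in a common fibre of `p`. -/
abbrev EnB {E B : Type*} [TopologicalSpace E] [TopologicalSpace B] (p : E → B) (n : ℕ) :
    Type _ :=
  {x : Fin n → E // ∃ b : B, ∀ i, p (x i) = b}

/-- The space `E^I_B` of paths in `E` lying in a single fibre of `p`. -/
abbrev EIB {E B : Type*} [TopologicalSpace E] [TopologicalSpace B] (p : E → B) : Type _ :=
  {γ : C(unitInterval, E) // ∃ b : B, ∀ t, p (γ t) = b}

/-- The time point `(i : ℝ)/(n-1)` in the unit interval, for `i : Fin n`, `n ≥ 2`. -/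
noncomputable def timePt (n : ℕ) (hn : 2 ≤ n) (i : Fin n) : unitInterval :=
  ⟨(i : ℕ) / ((n : ℝ) - 1), by
    have h1 : (1 : ℝ) ≤ (n : ℝ) - 1 := by
      have : (2 : ℝ) ≤ (n : ℝ) := by exact_mod_cast hn
      linarith
    have h2 : ((i : ℕ) : ℝ) ≤ (n : ℝ) - 1 := by
      have := i.isLt
      have : ((i : ℕ) : ℝ) ≤ (n : ℝ) - 1 ↔ ((i : ℕ) : ℝ) + 1 ≤ (n : ℝ) := by constructor <;> intro <;> linarith
      rw [this]
      exact_mod_cast i.isLt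
    constructor
    · positivity
    · rw [div_le_one (by linarith)]
      exact h2⟩

/-- The parametrized endpoint map `Π_n : E^I_B → E^n_B`,
`Π_n(γ) = (γ(0), γ(1/(n-1)), …, γ(1))`. -/
noncomputable def Pin {E B : Type*} [TopologicalSpace E] [TopologicalSpace B]
    (p : E → B) (n : ℕ) (hn : 2 ≤ n) (γ : EIB p) : EnB p n :=
  ⟨fun i => γ.1 (timePt n hn i), by
    obtain ⟨b, hb⟩ := γ.2
    exact ⟨b, fun i => hb _⟩⟩

/-- `HasCover p n hn r` : there are open sets `U_0, …, U_r` covering `E^n_B`, each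
admitting a continuous section of the parametrized endpoint map `Π_n`. -/
def HasCover {E B : Type*} [TopologicalSpace E] [TopologicalSpace B]
    (p : E → B) (n : ℕ) (hn : 2 ≤ n) (r : ℕ) : Prop :=
  ∃ U : Fin (r + 1) → Set (EnB p n),
    (∀ i, IsOpen (U i)) ∧ (⋃ i, U i) = Set.univ ∧
      ∀ i, ∃ s : C(U i, EIB p), ∀ x : U i, Pin p n hn (s x) = (x : EnB p n)

/-- Let `p : E → B` and `f : B̃ → B` be continuous, and let
`p̃ : Ẽ → B̃` be the pullback of `p` along `f`. Fix `n ≥ 2`, `r ≥ 0`. If `E^n_B` admits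
an open cover by `r + 1` sets each with a continuous section of `Π_n`, then
`Ẽ^n_{B̃}` admits an open cover by `r + 1` sets each with a continuous section of `Π̃_n`.
(This is the open-cover content of `TC_n[p̃] ≤ TC_n[p]`.) -/
theorem stmt_9 {E B Bt : Type*} [TopologicalSpace E] [TopologicalSpace B]
    [TopologicalSpace Bt] (p : E → B) (hp : Continuous p) (f : Bt → B) (hf : Continuous f)
    (n r : ℕ) (hn : 2 ≤ n)
    (hcov : HasCover p n hn r) :
    HasCover (fun q : {q : Bt × E // f q.1 = p q.2} => q.1.1) n hn r := by
  classical
  obtain ⟨U, hUopen, hUcov, hUsec⟩ := hcov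
  set Et := {q : Bt × E // f q.1 = p q.2} with hEt
  let pt : Et → Bt := fun q => q.1.1
  let i0 : Fin n := ⟨0, by omega⟩
  -- the induced map on tuple spaces
  let φ : EnB pt n → EnB p n := fun x =>
    ⟨fun j => (x.1 j).1.2, by
      obtain ⟨b, hb⟩ := x.2
      exact ⟨f b, fun j => ((x.1 j).2).symm.trans (congrArg f (hb j))⟩⟩
  have hφ : Continuous φ := by
    apply Continuous.subtype_mk
    exact continuous_pi fun j =>
      continuous_snd.comp (continuous_subtype_val.comp
        ((continuous_apply j).comp continuous_subtype_val))
  refine ⟨fun i => φ ⁻¹' (U i), fun i => (hUopen i).preimage hφ, ?_, ?_⟩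
  · ext x
    simp only [Set.mem_iUnion, Set.mem_preimage, Set.mem_univ, iff_true]
    have : φ x ∈ ⋃ i, U i := by rw [hUcov]; trivial
    simpa using this
  · intro i
    obtain ⟨s, hs⟩ := hUsec i
    -- inclusion of V i into U i
    let ψ : (φ ⁻¹' (U i)) → (U i) := fun x => ⟨φ x.1, x.2⟩
    have hψ : Continuous ψ := Continuous.subtype_mk (hφ.comp continuous_subtype_val) _
    -- fibre condition for lifted paths
    have key : ∀ (x : φ ⁻¹' (U i)) (t : unitInterval),
        f ((x.1.1 i0).1.1) = p ((s (ψ x)).1 t) := by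
      intro x t
      obtain ⟨b, hb⟩ := (s (ψ x)).2
      have h0 : (s (ψ x)).1 (timePt n hn i0) = (ψ x).1.1 i0 := by
        have := congrArg Subtype.val (hs (ψ x))
        exact congrFun this i0
      calc f ((x.1.1 i0).1.1) = p ((x.1.1 i0).1.2) := (x.1.1 i0).2
        _ = p ((s (ψ x)).1 (timePt n hn i0)) := by rw [h0]
        _ = b := hb _
        _ = p ((s (ψ x)).1 t) := (hb t).symm
    -- the uncurried lifted-path map
    let F : C((φ ⁻¹' (U i)) × unitInterval, Et) :=
      ⟨fun q => ⟨((q.1.1.1 i0).1.1, (s (ψ q.1)).1 q.2), key q.1 q.2⟩, by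
        apply Continuous.subtype_mk
        apply Continuous.prodMk
        · exact continuous_fst.comp <| continuous_subtype_val.comp <|
            ((continuous_apply i0).comp <|
              continuous_subtype_val.comp <| continuous_subtype_val.comp continuous_fst)
        · have hsc : Continuous fun x : (φ ⁻¹' (U i)) => ((s (ψ x)).1 : C(unitInterval, E)) :=
            continuous_subtype_val.comp (s.continuous.comp hψ)
          exact ContinuousEval.continuous_eval.comp
            ((hsc.comp continuous_fst).prodMk continuous_snd)⟩
    let σ : (φ ⁻¹' (U i)) → EIB pt := fun x =>
      ⟨F.curry x, ⟨(x.1.1 i0).1.1, fun t => rfl⟩⟩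
    have hσ : Continuous σ := Continuous.subtype_mk F.curry.continuous _
    refine ⟨⟨σ, hσ⟩, ?_⟩
    intro x
    apply Subtype.ext
    funext j
    apply Subtype.ext
    have h2 : (s (ψ x)).1 (timePt n hn j) = (x.1.1 j).1.2 := by
      have := congrArg Subtype.val (hs (ψ x))
      exact congrFun this j
    obtain ⟨b, hb⟩ := x.1.2
    have h1 : (x.1.1 i0).1.1 = (x.1.1 j).1.1 := (hb i0).trans (hb j).symm
    show ((x.1.1 i0).1.1, (s (ψ x)).1 (timePt n hn j)) = (x.1.1 j).1
    rw [h1, h2]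
end

section
/- Let p : E → B be a continuous map, let b ∈ B, and let F = p^{-1}(b) be the fibre over b, with subspace topology. Fix n ≥ 2 and r ≥ 0. If there exist open sets U_0, …, U_r covering E^n_B together with continuous maps s_i : U_i → E^I_B satisfying Π_n ∘ s_i = (inclusion of U_i into E^n_B) for each i, then there exist open sets V_0, …, V_r covering F^n together with continuous maps σ_i : V_i → C([0,1], F) such that for each i and each (x_1, …, x_n) ∈ V_i, the path γ = σ_i(x_1, …, x_n) satisfies γ((j-1)/(n-1)) = x_j for all j = 1, …, n. -/
/-- Let `p : E → B` be continuous, `b ∈ B`, and `F = p⁻¹(b)` the fibre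
over `b`. Fix `n ≥ 2`, `r ≥ 0`. If `E^n_B` admits an open cover by `r + 1` sets each
with a continuous section of `Π_n`, then `Fⁿ` admits an open cover by `r + 1` open sets
`V_i`, each with a continuous map `σ_i : V_i → C(I, F)` such that the path
`γ = σ_i(x_1, …, x_n)` satisfies `γ((j-1)/(n-1)) = x_j` for all `j`.
(This is the open-cover content of `TC_n(F) ≤ TC_n[p]`.) -/
theorem stmt_10 {E B : Type*} [TopologicalSpace E] [TopologicalSpace B]
    (p : E → B) (hp : Continuous p) (b : B) (n r : ℕ) (hn : 2 ≤ n)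
    (hcov : HasCover p n hn r) :
    ∃ V : Fin (r + 1) → Set (Fin n → {e : E // p e = b}),
      (∀ i, IsOpen (V i)) ∧ (⋃ i, V i) = Set.univ ∧
        ∀ i, ∃ σ : C(V i, C(unitInterval, {e : E // p e = b})),
          ∀ x : V i, ∀ j : Fin n,
            (σ x) (timePt n hn j) = (x : Fin n → {e : E // p e = b}) j := by
  classical
  obtain ⟨U, hUopen, hUcov, hUsec⟩ := hcov
  -- inclusion of Fⁿ into E^n_B
  set ι : (Fin n → {e : E // p e = b}) → EnB p n :=
    fun x => ⟨fun j => (x j).1, ⟨b, fun j => (x j).2⟩⟩ with hι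
  have hιcont : Continuous ι := by
    apply Continuous.subtype_mk
    exact continuous_pi fun j => continuous_subtype_val.comp (continuous_apply j)
  refine ⟨fun i => ι ⁻¹' (U i), fun i => (hUopen i).preimage hιcont, ?_, ?_⟩
  · apply Set.eq_univ_of_forall
    intro x
    have : ι x ∈ ⋃ i, U i := by rw [hUcov]; trivial
    obtain ⟨_, ⟨i, rfl⟩, hi⟩ := this
    exact Set.mem_iUnion.mpr ⟨i, hi⟩
  · intro i
    obtain ⟨s, hs⟩ := hUsec i
    -- the path through a point of V i lies in the fibre over b
    have hfib : ∀ x : (ι ⁻¹' (U i)), ∀ t : unitInterval,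
        p ((s ⟨ι x.1, x.2⟩).1 t) = b := by
      intro x t
      obtain ⟨b', hb'⟩ := (s ⟨ι x.1, x.2⟩).2
      have h0 : (s ⟨ι x.1, x.2⟩).1 (timePt n hn ⟨0, by omega⟩) = (x.1 ⟨0, by omega⟩).1 := by
        have := hs ⟨ι x.1, x.2⟩
        have := congrFun (congrArg Subtype.val this) ⟨0, by omega⟩
        exact this
      have hb : b' = b := by
        rw [← hb' (timePt n hn ⟨0, by omega⟩), h0]
        exact (x.1 ⟨0, by omega⟩).2
      rw [hb' t, hb]
    -- the uncurried map
    have hgc : Continuous fun x : (ι ⁻¹' (U i)) => (s ⟨ι x.1, x.2⟩ : EIB p).1 := by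
      exact continuous_subtype_val.comp (s.continuous.comp
        (Continuous.subtype_mk (hιcont.comp continuous_subtype_val) _))
    have hfc : Continuous fun q : (ι ⁻¹' (U i)) × unitInterval =>
        (⟨(s ⟨ι q.1.1, q.1.2⟩).1 q.2, hfib q.1 q.2⟩ : {e : E // p e = b}) := by
      apply Continuous.subtype_mk
      have : Continuous fun q : (ι ⁻¹' (U i)) × unitInterval =>
          ((fun x : (ι ⁻¹' (U i)) => (s ⟨ι x.1, x.2⟩ : EIB p).1) q.1, q.2) :=
        (hgc.comp continuous_fst).prodMk continuous_snd
      exact continuous_eval.comp this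
    refine ⟨ContinuousMap.curry ⟨_, hfc⟩, ?_⟩
    intro x j
    apply Subtype.ext
    show (s ⟨ι x.1, x.2⟩).1 (timePt n hn j) = ((x : Fin n → {e : E // p e = b}) j).1
    have := hs ⟨ι x.1, x.2⟩
    exact congrFun (congrArg Subtype.val this) j
end
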